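/- For all real t ≠ 0, the inequality 4(t cosh t - sinh t) ≤ sinh(2t) - 2t holds when t > 0, and equivalently 0 ≤ (t cosh t - sinh t)/(sinh(2t) - 2t)·4 ≤ 1 for all t > 0. (That is, 4(t cosh t − sinh t)/(sinh 2t − 2t) ≤ 1.) -/

import Mathlib

open Real

private lemma hasDerivAt_g (x : ℝ) :
    HasDerivAt (fun t : ℝ => t * Real.cosh t - Real.sinh t) (x * Real.sinh x) x := by
  have h1 : HasDerivAt (fun t : ℝ => t * Real.cosh t)
      (1 * Real.cosh x + x * Real.sinh x) x :=
    (hasDerivAt_id x).mul (Real.hasDerivAt_cosh x)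
  have h2 := h1.sub (Real.hasDerivAt_sinh x)
  exact h2.congr_deriv (by ring)

private lemma num_nonneg {x : ℝ} (hx : 0 ≤ x) : 0 ≤ x * Real.cosh x - Real.sinh x := by
  have hmono : MonotoneOn (fun t : ℝ => t * Real.cosh t - Real.sinh t) (Set.Ici 0) := by
    apply monotoneOn_of_deriv_nonneg (convex_Ici 0)
    · exact (Continuous.sub (continuous_id.mul Real.continuous_cosh)
        Real.continuous_sinh).continuousOn
    · intro y hy
      exact (hasDerivAt_g y).differentiableAt.differentiableWithinAt
    · intro y hy
      rw [interior_Ici] at hy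
      rw [(hasDerivAt_g y).deriv]
      exact mul_nonneg hy.le (Real.sinh_nonneg_iff.2 hy.le)
  have := hmono (Set.self_mem_Ici) (Set.mem_Ici.2 hx) hx
  simpa using this

private lemma hasDerivAt_f (x : ℝ) :
    HasDerivAt (fun t : ℝ => Real.sinh (2 * t) - 2 * t - 4 * (t * Real.cosh t - Real.sinh t))
      (2 * Real.cosh (2 * x) - 2 - 4 * (x * Real.sinh x)) x := by
  have h1 : HasDerivAt (fun t : ℝ => Real.sinh (2 * t)) (Real.cosh (2 * x) * 2) x := by
    have := (Real.hasDerivAt_sinh (2 * x)).comp x ((hasDerivAt_id x).const_mul 2)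
    exact this.congr_deriv (by ring)
  have h2 : HasDerivAt (fun t : ℝ => 2 * t) (2 : ℝ) x := by
    simpa using (hasDerivAt_id x).const_mul 2
  have h3 := (hasDerivAt_g x).const_mul 4
  have h := (h1.sub h2).sub h3
  exact h.congr_deriv (by ring)

private lemma key {x : ℝ} (hx : 0 ≤ x) :
    4 * (x * Real.cosh x - Real.sinh x) ≤ Real.sinh (2 * x) - 2 * x := by
  have hmono : MonotoneOn
      (fun t : ℝ => Real.sinh (2 * t) - 2 * t - 4 * (t * Real.cosh t - Real.sinh t))
      (Set.Ici 0) := by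
    apply monotoneOn_of_deriv_nonneg (convex_Ici 0)
    · exact Continuous.continuousOn (by continuity)
    · intro y hy
      exact (hasDerivAt_f y).differentiableAt.differentiableWithinAt
    · intro y hy
      rw [interior_Ici] at hy
      rw [(hasDerivAt_f y).deriv]
      have hcosh : Real.cosh (2 * y) = Real.cosh y ^ 2 + Real.sinh y ^ 2 := Real.cosh_two_mul y
      have hsq : Real.cosh y ^ 2 = Real.sinh y ^ 2 + 1 := Real.cosh_sq y
      have hle : y ≤ Real.sinh y := (Real.self_lt_sinh_iff.2 hy).le
      have hs : 0 ≤ Real.sinh y := Real.sinh_nonneg_iff.2 hy.le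
      have : 2 * Real.cosh (2 * y) - 2 - 4 * (y * Real.sinh y)
          = 4 * (Real.sinh y * (Real.sinh y - y)) := by
        rw [hcosh, hsq]; ring
      rw [this]
      have : 0 ≤ Real.sinh y - y := by linarith
      nlinarith
  have := hmono (Set.self_mem_Ici) (Set.mem_Ici.2 hx) hx
  simp only [mul_zero, Real.sinh_zero, zero_mul, zero_sub, neg_zero, mul_zero, sub_zero] at this
  linarith [this]

theorem stmt_15 (t : ℝ) (ht : 0 < t) :
    4 * (t * Real.cosh t - Real.sinh t) ≤ Real.sinh (2 * t) - 2 * t ∧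
    0 ≤ 4 * (t * Real.cosh t - Real.sinh t) / (Real.sinh (2 * t) - 2 * t) ∧
    4 * (t * Real.cosh t - Real.sinh t) / (Real.sinh (2 * t) - 2 * t) ≤ 1 := by
  have hkey := key ht.le
  have hnum := num_nonneg ht.le
  have hden : 0 < Real.sinh (2 * t) - 2 * t := by
    have := Real.self_lt_sinh_iff.2 (by linarith : (0:ℝ) < 2 * t)
    linarith
  refine ⟨hkey, div_nonneg (by linarith) hden.le, ?_⟩
  rw [div_le_one hden]
  exact hkey
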